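/- Let F be a probability measure with support contained in [0, b̃], y > 0, σ > 0, z = u + iv with v > 2σ√(y·b̃), and suppose t lies in the strip D = {t ∈ ℂ : 0 ≤ Im(t) ≤ v/(2σ²)} and satisfies Im(z - tσ²) > 0. Then the map G(t) = y·∫ x/(x - z + tσ²) dF(x) - 1 maps D into D and is a contraction on D with Lipschitz constant strictly less than 1; consequently the equation t = G(t) has a unique solution in D. -/

import Mathlib

open MeasureTheory

set_option maxHeartbeats 1600000

/-- Let `F` be a probability measure on `[0, b̃]`, `y, σ, b̃ > 0`,
`z = u + iv` with `v > 2σ√(y b̃)`, and `D = {t : 0 ≤ Im t ≤ v/(2σ²)}`. Then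
`G(t) = y ∫ x/(x - z + tσ²) dF(x) - 1` maps `D` into `D`, is a contraction on `D`
with some Lipschitz constant `L < 1`, and hence has a unique fixed point in `D`. -/
theorem contraction_unique_fixed_point
    (F : Measure ℝ) [IsProbabilityMeasure F] (btil : ℝ) (hb : 0 < btil)
    (hsupp : F ((Set.Icc (0 : ℝ) btil)ᶜ) = 0)
    (y σ : ℝ) (hy : 0 < y) (hσ : 0 < σ)
    (z : ℂ) (hv : 2 * σ * Real.sqrt (y * btil) < z.im)
    (D : Set ℂ) (hD : D = {t : ℂ | 0 ≤ t.im ∧ t.im ≤ z.im / (2 * σ ^ 2)})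
    (G : ℂ → ℂ)
    (hG : ∀ t : ℂ, G t = (y : ℂ) * (∫ x, (x : ℂ) / ((x : ℂ) - z + t * (σ : ℂ) ^ 2) ∂F) - 1) :
    (∀ t ∈ D, G t ∈ D) ∧
    (∃ L : ℝ, 0 ≤ L ∧ L < 1 ∧ ∀ t ∈ D, ∀ t' ∈ D, dist (G t) (G t') ≤ L * dist t t') ∧
    (∃! t : ℂ, t ∈ D ∧ G t = t) := by
  set v := z.im with hvdef
  have hv0 : 0 < v := lt_of_le_of_lt (by positivity) hv
  have hv2 : 4 * σ ^ 2 * (y * btil) < v ^ 2 := by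
    have h1 : (2 * σ * Real.sqrt (y * btil)) ^ 2 < v ^ 2 :=
      pow_lt_pow_left₀ hv (by positivity) (by norm_num)
    calc 4 * σ ^ 2 * (y * btil) = (2 * σ * Real.sqrt (y * btil)) ^ 2 := by
          rw [mul_pow, mul_pow, Real.sq_sqrt (by positivity)]; ring
      _ < v ^ 2 := h1
  have hae : ∀ᵐ x ∂F, x ∈ Set.Icc (0 : ℝ) btil := by
    rw [ae_iff]
    exact hsupp
  -- denominator
  set d : ℂ → ℝ → ℂ := fun t x => (x : ℂ) - z + t * (σ : ℂ) ^ 2 with hd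
  have hdim : ∀ t : ℂ, ∀ x : ℝ, (d t x).im = t.im * σ ^ 2 - v := by
    intro t x
    simp [hd, ← Complex.ofReal_pow, Complex.add_im, Complex.sub_im, Complex.mul_im]
    ring
  have hmem : ∀ t ∈ D, 0 ≤ t.im ∧ t.im * σ ^ 2 ≤ v / 2 := by
    intro t ht
    rw [hD] at ht
    refine ⟨ht.1, ?_⟩
    have h2 := ht.2
    rw [le_div_iff₀ (by positivity : (0:ℝ) < 2 * σ ^ 2)] at h2
    nlinarith
  have hden : ∀ t ∈ D, ∀ x : ℝ, v / 2 ≤ ‖d t x‖ := by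
    intro t ht x
    obtain ⟨h1, h2⟩ := hmem t ht
    have h3 : v / 2 ≤ |(d t x).im| := by
      rw [hdim, abs_sub_comm, abs_of_nonneg (by nlinarith)]
      nlinarith
    exact h3.trans (Complex.abs_im_le_norm _)
  have hdne : ∀ t ∈ D, ∀ x : ℝ, d t x ≠ 0 := by
    intro t ht x h
    have h4 := hden t ht x
    rw [h] at h4
    simp at h4
    nlinarith
  -- integrand
  set f : ℂ → ℝ → ℂ := fun t x => (x : ℂ) / d t x with hf
  have hmeas : ∀ t ∈ D, AEStronglyMeasurable (f t) F := by
    intro t ht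
    apply Continuous.aestronglyMeasurable
    exact Complex.continuous_ofReal.div (by continuity) (fun x => hdne t ht x)
  have hbound : ∀ t ∈ D, ∀ᵐ x ∂F, ‖f t x‖ ≤ btil / (v / 2) := by
    intro t ht
    filter_upwards [hae] with x hx
    rw [hf]
    simp only [norm_div, Complex.norm_real, Real.norm_eq_abs]
    rw [abs_of_nonneg hx.1]
    exact div_le_div₀ hb.le hx.2 (by positivity) (hden t ht x)
  have hint : ∀ t ∈ D, Integrable (f t) F := by
    intro t ht
    exact Integrable.mono' (integrable_const _) (hmeas t ht) (hbound t ht)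
  -- imaginary part of integrand
  have hfim : ∀ t : ℂ, ∀ x : ℝ, (f t x).im = x * (v - t.im * σ ^ 2) / Complex.normSq (d t x) := by
    intro t x
    rw [hf]
    simp only [Complex.div_im, Complex.ofReal_im, Complex.ofReal_re]
    rw [hdim]
    ring
  have hGim : ∀ t : ℂ, (G t).im = y * (∫ x, f t x ∂F).im := by
    intro t
    rw [hG]
    simp [Complex.sub_im, Complex.mul_im]
    exact Or.inl rfl
  have himint : ∀ t ∈ D, (∫ x, f t x ∂F).im = ∫ x, (f t x).im ∂F := by
    intro t ht
    simpa using (integral_im (hint t ht)).symm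
  -- maps D into D
  have hmaps : ∀ t ∈ D, G t ∈ D := by
    intro t ht
    obtain ⟨h1, h2⟩ := hmem t ht
    have him_nonneg : 0 ≤ ∫ x, (f t x).im ∂F := by
      apply integral_nonneg_of_ae
      filter_upwards [hae] with x hx
      rw [hfim]
      exact div_nonneg (mul_nonneg hx.1 (by nlinarith)) (Complex.normSq_nonneg _)
    have him_le : (∫ x, (f t x).im ∂F) ≤ 2 * btil / v := by
      have hb2 : ∀ᵐ x ∂F, (f t x).im ≤ 2 * btil / v := by
        filter_upwards [hae] with x hx
        rw [hfim]
        have hc : v / 2 ≤ v - t.im * σ ^ 2 := by nlinarith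
        have hc0 : 0 < v - t.im * σ ^ 2 := by nlinarith
        have hns : (v - t.im * σ ^ 2) ^ 2 ≤ Complex.normSq (d t x) := by
          rw [Complex.normSq_apply]
          nlinarith [sq_nonneg (d t x).re, hdim t x]
        calc x * (v - t.im * σ ^ 2) / Complex.normSq (d t x)
            ≤ x * (v - t.im * σ ^ 2) / (v - t.im * σ ^ 2) ^ 2 :=
              div_le_div_of_nonneg_left (by nlinarith [hx.1]) (by positivity) hns
          _ = x / (v - t.im * σ ^ 2) := by
              rw [sq (v - t.im * σ ^ 2), mul_div_mul_right _ _ hc0.ne']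
          _ ≤ btil / (v / 2) := div_le_div₀ hb.le hx.2 (by positivity) hc
          _ = 2 * btil / v := by
              rw [div_div_eq_mul_div]
              ring_nf
      calc (∫ x, (f t x).im ∂F) ≤ ∫ _x, 2 * btil / v ∂F :=
            integral_mono_ae (Integrable.im (hint t ht)) (integrable_const _) hb2
        _ = 2 * btil / v := by simp
    rw [hD]
    constructor
    · rw [hGim, himint t ht]
      positivity
    · rw [hGim, himint t ht]
      calc y * ∫ x, (f t x).im ∂F ≤ y * (2 * btil / v) :=
            mul_le_mul_of_nonneg_left him_le hy.le
        _ ≤ v / (2 * σ ^ 2) := by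
            rw [mul_div_assoc', div_le_div_iff₀ hv0 (by positivity)]
            nlinarith
  -- Lipschitz
  set L : ℝ := 4 * y * σ ^ 2 * btil / v ^ 2 with hL
  have hL0 : 0 ≤ L := by positivity
  have hL1 : L < 1 := by
    rw [hL, div_lt_one (by positivity)]
    nlinarith
  have hlip : ∀ t ∈ D, ∀ t' ∈ D, dist (G t) (G t') ≤ L * dist t t' := by
    intro t ht t' ht'
    rw [dist_eq_norm, hG, hG]
    have heq : (y : ℂ) * (∫ x, f t x ∂F) - 1 - ((y : ℂ) * (∫ x, f t' x ∂F) - 1)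
        = (y : ℂ) * ∫ x, (f t x - f t' x) ∂F := by
      rw [integral_sub (hint t ht) (hint t' ht')]
      ring
    rw [heq, norm_mul, Complex.norm_real, Real.norm_eq_abs, abs_of_pos hy]
    have hkey : ‖∫ x, (f t x - f t' x) ∂F‖ ≤ btil * σ ^ 2 * dist t t' / (v / 2) ^ 2 := by
      have hptw : ∀ᵐ x ∂F, ‖f t x - f t' x‖ ≤ btil * σ ^ 2 * dist t t' / (v / 2) ^ 2 := by
        filter_upwards [hae] with x hx
        have hne : d t x ≠ 0 := hdne t ht x
        have hne' : d t' x ≠ 0 := hdne t' ht' x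
        have heq2 : f t x - f t' x = (x : ℂ) * ((t' - t) * (σ : ℂ) ^ 2) / (d t x * d t' x) := by
          rw [hf]
          field_simp
          rw [hd]
          ring
        rw [heq2]
        simp only [norm_div, norm_mul, Complex.norm_real, Real.norm_eq_abs]
        rw [abs_of_nonneg hx.1]
        have h1 : ‖((σ : ℂ)) ^ 2‖ = σ ^ 2 := by
          rw [norm_pow, Complex.norm_real, Real.norm_eq_abs, sq_abs]
        rw [h1]
        have h2 : ‖t' - t‖ = dist t t' := by rw [dist_eq_norm, norm_sub_rev]
        rw [h2]
        apply div_le_div₀ (by positivity)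
        · calc x * (dist t t' * σ ^ 2) ≤ btil * (dist t t' * σ ^ 2) :=
              mul_le_mul_of_nonneg_right hx.2 (by positivity)
            _ = btil * σ ^ 2 * dist t t' := by ring
        · positivity
        · calc (v / 2) ^ 2 = (v / 2) * (v / 2) := by ring
            _ ≤ ‖d t x‖ * ‖d t' x‖ :=
              mul_le_mul (hden t ht x) (hden t' ht' x) (by positivity) (norm_nonneg _)
      calc ‖∫ x, (f t x - f t' x) ∂F‖ ≤ ∫ _x, btil * σ ^ 2 * dist t t' / (v / 2) ^ 2 ∂F :=
            norm_integral_le_of_norm_le (integrable_const _) hptw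
        _ = btil * σ ^ 2 * dist t t' / (v / 2) ^ 2 := by simp
    calc y * ‖∫ x, (f t x - f t' x) ∂F‖ ≤ y * (btil * σ ^ 2 * dist t t' / (v / 2) ^ 2) :=
          mul_le_mul_of_nonneg_left hkey hy.le
      _ = L * dist t t' := by
          rw [hL]
          field_simp
          ring
  refine ⟨hmaps, ⟨L, hL0, hL1, hlip⟩, ?_⟩
  -- fixed point
  have hclosed : IsClosed D := by
    rw [hD]
    exact IsClosed.preimage Complex.continuous_im (isClosed_Icc (a := 0) (b := v / (2 * σ ^ 2)))
  have : CompleteSpace D := hclosed.completeSpace_coe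
  have hne : Nonempty D := ⟨⟨0, by rw [hD]; exact ⟨by simp, by simp; positivity⟩⟩⟩
  let g : D → D := fun t => ⟨G t, hmaps t t.2⟩
  have hcon : ContractingWith L.toNNReal g := by
    constructor
    · simpa [← NNReal.coe_lt_coe, Real.coe_toNNReal _ hL0] using hL1
    · apply LipschitzWith.of_dist_le_mul
      intro a b
      rw [Subtype.dist_eq]
      simpa [Real.coe_toNNReal _ hL0, Subtype.dist_eq, g] using hlip a a.2 b b.2
  obtain ⟨p, hp⟩ : ∃ p : D, Function.IsFixedPt g p :=
    ⟨ContractingWith.fixedPoint g hcon, ContractingWith.fixedPoint_isFixedPt hcon⟩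
  refine ⟨p.1, ⟨p.2, ?_⟩, ?_⟩
  · exact congrArg Subtype.val hp
  · rintro s ⟨hsD, hsfix⟩
    by_contra hne'
    have hd0 : 0 < dist s p.1 := dist_pos.2 (by exact_mod_cast hne')
    have hle : dist s p.1 ≤ L * dist s p.1 := by
      have h5 := hlip s hsD p.1 p.2
      have hp' : G p.1 = p.1 := congrArg Subtype.val hp
      rwa [hsfix, hp'] at h5
    nlinarith
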